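/- In $\mathbb{R}^{2,q}$ with $z = \langle e_1 \rangle$, $x = \langle e_{q+2} \rangle$, let $y$ be the isotropic line spanned by $(q_J(\mathsf{y}), \mathsf{y}, 1)$ with $\mathsf{y} \in c_J(V_J)$, and for $\mathsf{w} \in \overline{c}_J(V_J)$ let $x_t$ be the isotropic line spanned by $(t^2 q_J(\mathsf{w}), t\mathsf{w}, 1)$. Then ${\rm cr}_1(z, x, x_t, y) = \frac{-q_J(\mathsf{y})}{-t^2 q_J(\mathsf{w}) + 2t b_J(\mathsf{w},\mathsf{y}) - q_J(\mathsf{y})}$ and its derivative at $t = 0$ equals $\frac{2 b_J(\mathsf{w},\mathsf{y})}{q_J(\mathsf{y})} > 0$. -/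

import Mathlib

open Matrix

/-- The symmetric matrix `J` with `J_{0,q-1} = J_{q-1,0} = 1`, `J_{ii} = -1` for the
middle indices, and all other entries zero. -/
noncomputable def Jmat (q : ℕ) : Matrix (Fin q) (Fin q) ℝ :=
  Matrix.of fun i j =>
    if ((i : ℕ) = 0 ∧ (j : ℕ) = q - 1) ∨ ((i : ℕ) = q - 1 ∧ (j : ℕ) = 0) then 1
    else if i = j ∧ (i : ℕ) ≠ 0 ∧ (i : ℕ) ≠ q - 1 then -1 else 0

/-- The bilinear form `b_J(s,t) = (1/2) sᵀ J t`. -/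
noncomputable def bJ (q : ℕ) (s t : Fin q → ℝ) : ℝ := (1 / 2) * (s ⬝ᵥ (Jmat q *ᵥ t))

/-- The quadratic form `q_J(s) = b_J(s,s)`. -/
noncomputable def qJ (q : ℕ) (s : Fin q → ℝ) : ℝ := bJ q s s

/-- The open cone `c_J(V_J)` of positive vectors with positive first entry. -/
def inCJ (n : ℕ) (s : Fin (n + 1) → ℝ) : Prop := 0 < s 0 ∧ 0 < qJ (n + 1) s

/-- The partial closure `c̄_J(V_J)`: `q_J ≥ 0`, first entry still strictly positive. -/
def inCJbar (n : ℕ) (s : Fin (n + 1) → ℝ) : Prop := 0 < s 0 ∧ 0 ≤ qJ (n + 1) s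

/-- Index type for `ℝ^{2,q}` in the block decomposition `⟨e₁⟩ ⊕ V_J ⊕ ⟨e_{q+2}⟩`. -/
abbrev D2 (q : ℕ) := Fin 1 ⊕ (Fin q ⊕ Fin 1)

/-- The form `Q` of signature `(2,q)` with matrix `[[0,0,-1],[0,J,0],[-1,0,0]]`. -/
noncomputable def Q2 (q : ℕ) : Matrix (D2 q) (D2 q) ℝ :=
  Matrix.fromBlocks 0 (Matrix.fromCols 0 (-1)) (Matrix.fromRows 0 (-1))
    (Matrix.fromBlocks (Jmat q) 0 0 0)

/-- The vector `(a, s, c) ∈ ℝ^{2,q}`. -/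
def vecMk (q : ℕ) (a : ℝ) (s : Fin q → ℝ) (c : ℝ) : D2 q → ℝ :=
  Sum.elim (fun _ => a) (Sum.elim s fun _ => c)

/-- The bilinear form `Q(v,w)` on `ℝ^{2,q}`. -/
noncomputable def Qf (q : ℕ) (v w : D2 q → ℝ) : ℝ := v ⬝ᵥ (Q2 q *ᵥ w)

/-- The cross ratio of four isotropic lines in `ℝ^{2,q}`, expressed in terms of
spanning vectors:  `cr₁(V₁,W₁,W₂,V₂) = (Q(ṽ₁,w̃₂)/Q(ṽ₁,w̃₁)) (Q(ṽ₂,w̃₁)/Q(ṽ₂,w̃₂))`. -/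
noncomputable def cr1Q (q : ℕ) (v1 w1 w2 v2 : D2 q → ℝ) : ℝ :=
  (Qf q v1 w2 / Qf q v1 w1) * (Qf q v2 w1 / Qf q v2 w2)

/-- The unipotent element `E₁(s)` for `p = 2`. -/
noncomputable def E1 (q : ℕ) (s : Fin q → ℝ) : Matrix (D2 q) (D2 q) ℝ :=
  Matrix.fromBlocks 1
    (Matrix.fromCols (Matrix.of fun _ j => s j) (Matrix.of fun _ _ => qJ q s))
    0 (Matrix.fromBlocks 1 (Matrix.of fun i _ => (Jmat q *ᵥ s) i) 0 1)
lemma Qf_vecMk (q : ℕ) (a c a' c' : ℝ) (s s' : Fin q → ℝ) :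
    Qf q (vecMk q a s c) (vecMk q a' s' c')
      = -(a * c') - c * a' + s ⬝ᵥ (Jmat q *ᵥ s') := by
  simp [Qf, Q2, vecMk, Matrix.fromBlocks_mulVec, sumElim_dotProduct_sumElim,
    Matrix.fromRows_mulVec, Matrix.fromCols_mulVec_sumElim, Matrix.mulVec,
    dotProduct, Fin.sum_univ_one]
  ring
lemma Jmat_symm (q : ℕ) : (Jmat q)ᵀ = Jmat q := by
  ext i j
  simp only [Jmat, Matrix.transpose_apply, Matrix.of_apply, Fin.ext_iff]
  split_ifs <;> first | rfl | omega

lemma bJ_symm (q : ℕ) (s t : Fin q → ℝ) : bJ q s t = bJ q t s := by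
  unfold bJ
  rw [Matrix.dotProduct_mulVec, ← Matrix.mulVec_transpose, Jmat_symm, dotProduct_comm]

lemma bJ_smul (q : ℕ) (c : ℝ) (s t : Fin q → ℝ) : bJ q s (c • t) = c * bJ q s t := by
  unfold bJ
  rw [Matrix.mulVec_smul, dotProduct_smul, smul_eq_mul]
  ring
lemma key_ineq (a1 b1 a2 b2 P W Y : ℝ) (ha1 : 0 < a1) (ha2 : 0 < a2)
    (hW : 0 ≤ W) (hY : 0 ≤ Y) (hw : W ≤ 2 * (a1 * b1)) (hy : Y < 2 * (a2 * b2))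
    (hP : P ^ 2 ≤ W * Y) : 0 < a1 * b2 + b1 * a2 - P := by
  have hb2 : 0 < b2 := by nlinarith
  have hb1 : 0 ≤ b1 := by nlinarith
  rcases eq_or_lt_of_le hb1 with h | h
  · have hW0 : W = 0 := by nlinarith
    have hP0 : P = 0 := by nlinarith [sq_nonneg P]
    nlinarith
  · by_contra hc
    push_neg at hc
    have hS : 0 < a1 * b2 + b1 * a2 := by positivity
    have hPS : a1 * b2 + b1 * a2 ≤ P := by linarith
    have h1 : (a1 * b2 + b1 * a2) ^ 2 ≤ P ^ 2 := by nlinarith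
    have h2 : W * Y ≤ 2 * (a1 * b1) * Y :=
      mul_le_mul_of_nonneg_right hw hY
    have h3 : 2 * (a1 * b1) * Y < 2 * (a1 * b1) * (2 * (a2 * b2)) :=
      mul_lt_mul_of_pos_left hy (by positivity)
    nlinarith [sq_nonneg (a1 * b2 - b1 * a2)]
/-- middle part of a vector -/
def Mid (m : ℕ) (s : Fin (m + 2) → ℝ) : Fin (m + 2) → ℝ :=
  fun i => if (i : ℕ) = 0 ∨ (i : ℕ) = m + 1 then 0 else s i

lemma Jmat_row (m : ℕ) (t : Fin (m + 2) → ℝ) (i : Fin (m + 2)) :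
    (Jmat (m + 2) *ᵥ t) i =
      (if (i : ℕ) = 0 then t ⟨m + 1, by omega⟩ else 0) +
      (if (i : ℕ) = m + 1 then t 0 else 0) +
      (if (i : ℕ) ≠ 0 ∧ (i : ℕ) ≠ m + 1 then -t i else 0) := by
  have hq : m + 2 - 1 = m + 1 := rfl
  by_cases hi0 : (i : ℕ) = 0
  · have hiL : (i : ℕ) ≠ m + 1 := by omega
    rw [if_pos hi0, if_neg hiL, if_neg (by tauto)]
    simp only [Matrix.mulVec, dotProduct, Jmat, Matrix.of_apply, hq]
    rw [Finset.sum_eq_single (⟨m + 1, by omega⟩ : Fin (m + 2))]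
    · simp [hi0]
    · intro j _ hj
      have : (j : ℕ) ≠ m + 1 := fun h => hj (Fin.ext h)
      rw [if_neg (by omega), if_neg (by
        rintro ⟨rfl, h2, _⟩; exact h2 hi0)]
      ring
    · simp
  · by_cases hiL : (i : ℕ) = m + 1
    · rw [if_neg hi0, if_pos hiL, if_neg (by tauto)]
      simp only [Matrix.mulVec, dotProduct, Jmat, Matrix.of_apply, hq]
      rw [Finset.sum_eq_single (0 : Fin (m + 2))]
      · simp [hiL, hi0]
      · intro j _ hj
        have : (j : ℕ) ≠ 0 := fun h => hj (Fin.ext h)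
        rw [if_neg (by omega), if_neg (by
          rintro ⟨rfl, _, h3⟩; exact h3 hiL)]
        ring
      · simp
    · rw [if_neg hi0, if_neg hiL, if_pos ⟨hi0, hiL⟩]
      simp only [Matrix.mulVec, dotProduct, Jmat, Matrix.of_apply, hq]
      rw [Finset.sum_eq_single i]
      · rw [if_neg (by omega), if_pos ⟨rfl, hi0, hiL⟩]; ring
      · intro j _ hj
        rw [if_neg (by omega), if_neg (by rintro ⟨rfl, _, _⟩; exact hj rfl)]
        ring
      · simp
lemma bJ_explicit (m : ℕ) (s t : Fin (m + 2) → ℝ) :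
    2 * bJ (m + 2) s t = s 0 * t ⟨m + 1, by omega⟩ + s ⟨m + 1, by omega⟩ * t 0
      - ∑ i, Mid m s i * Mid m t i := by
  have h2 : 2 * bJ (m + 2) s t = ∑ i, s i * (Jmat (m + 2) *ᵥ t) i := by
    unfold bJ dotProduct; ring
  rw [h2]
  simp only [Jmat_row, mul_add]
  rw [Finset.sum_add_distrib, Finset.sum_add_distrib]
  have p1 : ∑ i : Fin (m + 2), s i * (if (i : ℕ) = 0 then t ⟨m + 1, by omega⟩ else 0)
      = s 0 * t ⟨m + 1, by omega⟩ := by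
    rw [Finset.sum_eq_single (0 : Fin (m + 2))]
    · simp
    · intro j _ hj
      rw [if_neg (show ¬ ((j : ℕ) = 0) from fun h => hj (Fin.ext h)), mul_zero]
    · simp
  have p2 : ∑ i : Fin (m + 2), s i * (if (i : ℕ) = m + 1 then t 0 else 0)
      = s ⟨m + 1, by omega⟩ * t 0 := by
    rw [Finset.sum_eq_single (⟨m + 1, by omega⟩ : Fin (m + 2))]
    · simp
    · intro j _ hj
      rw [if_neg (by simpa [Fin.ext_iff] using hj), mul_zero]
    · simp
  have p3 : ∑ i : Fin (m + 2), s i * (if (i : ℕ) ≠ 0 ∧ (i : ℕ) ≠ m + 1 then -t i else 0)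
      = -∑ i, Mid m s i * Mid m t i := by
    rw [← Finset.sum_neg_distrib]
    apply Finset.sum_congr rfl
    intro i _
    simp only [Mid]
    split_ifs <;> first | ring1 | (exfalso; omega)
  rw [p1, p2, p3]
  ring
lemma bJ_pos (n : ℕ) (ys w : Fin (n + 1) → ℝ) (hy : inCJ n ys) (hw : inCJbar n w) :
    0 < bJ (n + 1) w ys := by
  obtain ⟨hy0, hyq⟩ := hy
  obtain ⟨hw0, hwq⟩ := hw
  cases n with
  | zero =>
    have : bJ 1 w ys = 1 / 2 * (w 0 * ys 0) := by
      simp [bJ, Jmat, Matrix.mulVec, dotProduct, Fin.sum_univ_one]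
    rw [this]
    positivity
  | succ m =>
    unfold qJ at hyq hwq
    have hby := bJ_explicit m w ys
    have hbw := bJ_explicit m w w
    have hbys := bJ_explicit m ys ys
    have hCS := Finset.sum_mul_sq_le_sq_mul_sq Finset.univ (Mid m w) (Mid m ys)
    have hsq : ∀ v : Fin (m + 2) → ℝ, ∑ i, v i * v i = ∑ i, v i ^ 2 := by
      intro v; apply Finset.sum_congr rfl; intro i _; ring
    have hWnn : (0:ℝ) ≤ ∑ i, Mid m w i ^ 2 := Finset.sum_nonneg fun i _ => sq_nonneg _
    have hYnn : (0:ℝ) ≤ ∑ i, Mid m ys i ^ 2 := Finset.sum_nonneg fun i _ => sq_nonneg _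
    have key := key_ineq (w 0) (w ⟨m + 1, by omega⟩) (ys 0) (ys ⟨m + 1, by omega⟩)
      (∑ i, Mid m w i * Mid m ys i) (∑ i, Mid m w i ^ 2) (∑ i, Mid m ys i ^ 2)
      hw0 hy0 hWnn hYnn
      (by rw [← hsq]; nlinarith [hbw])
      (by rw [← hsq]; nlinarith [hbys])
      hCS
    nlinarith [hby]

/-- With `z = ⟨e₁⟩`, `x = ⟨e_{q+2}⟩`, `y` the isotropic line spanned by `(q_J(𝗒), 𝗒, 1)`
with `𝗒 ∈ c_J(V_J)`, and `x_t` the isotropic line spanned by `(t² q_J(𝗐), t𝗐, 1)` for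
`𝗐 ∈ c̄_J(V_J)`, `𝗐 ≠ 0`:  `cr₁(z,x,x_t,y) = -q_J(𝗒)/(-t²q_J(𝗐) + 2t b_J(𝗐,𝗒) - q_J(𝗒))`,
and its derivative at `t = 0` equals `2 b_J(𝗐,𝗒)/q_J(𝗒) > 0`. -/
theorem stmt_12 (n : ℕ) (ys w : Fin (n + 1) → ℝ)
    (hy : inCJ n ys) (hw : inCJbar n w) (hwne : w ≠ 0) :
    (∀ t : ℝ, cr1Q (n + 1) (vecMk (n + 1) 1 0 0) (vecMk (n + 1) 0 0 1)
        (vecMk (n + 1) (t ^ 2 * qJ (n + 1) w) (t • w) 1)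
        (vecMk (n + 1) (qJ (n + 1) ys) ys 1)
      = (-qJ (n + 1) ys) /
          (-(t ^ 2 * qJ (n + 1) w) + 2 * t * bJ (n + 1) w ys - qJ (n + 1) ys)) ∧
    HasDerivAt (fun t : ℝ => cr1Q (n + 1) (vecMk (n + 1) 1 0 0) (vecMk (n + 1) 0 0 1)
        (vecMk (n + 1) (t ^ 2 * qJ (n + 1) w) (t • w) 1)
        (vecMk (n + 1) (qJ (n + 1) ys) ys 1))
      (2 * bJ (n + 1) w ys / qJ (n + 1) ys) 0 ∧
    0 < 2 * bJ (n + 1) w ys / qJ (n + 1) ys := by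
  have hb : 0 < bJ (n + 1) w ys := bJ_pos n ys w hy hw
  have hqy : 0 < qJ (n + 1) ys := hy.2
  set b := bJ (n + 1) w ys with hbdef
  set qy := qJ (n + 1) ys with hqydef
  set qw := qJ (n + 1) w with hqwdef
  have e2 : ∀ s s' : Fin (n + 1) → ℝ, s ⬝ᵥ (Jmat (n + 1) *ᵥ s') = 2 * bJ (n + 1) s s' := by
    intro s s'; unfold bJ; ring
  have h1 : Qf (n + 1) (vecMk (n + 1) 1 0 0) (vecMk (n + 1) 0 0 1) = -1 := by
    rw [Qf_vecMk]; simp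
  have h2 : ∀ t : ℝ, Qf (n + 1) (vecMk (n + 1) 1 0 0)
      (vecMk (n + 1) (t ^ 2 * qw) (t • w) 1) = -1 := by
    intro t; rw [Qf_vecMk]; simp
  have h3 : Qf (n + 1) (vecMk (n + 1) qy ys 1) (vecMk (n + 1) 0 0 1) = -qy := by
    rw [Qf_vecMk]; simp
  have h4 : ∀ t : ℝ, Qf (n + 1) (vecMk (n + 1) qy ys 1)
      (vecMk (n + 1) (t ^ 2 * qw) (t • w) 1)
      = -(t ^ 2 * qw) + 2 * t * b - qy := by
    intro t
    rw [Qf_vecMk, e2, bJ_smul, bJ_symm, ← hbdef]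
    ring
  have hcr : ∀ t : ℝ, cr1Q (n + 1) (vecMk (n + 1) 1 0 0) (vecMk (n + 1) 0 0 1)
      (vecMk (n + 1) (t ^ 2 * qw) (t • w) 1) (vecMk (n + 1) qy ys 1)
      = -qy / (-(t ^ 2 * qw) + 2 * t * b - qy) := by
    intro t
    rw [cr1Q, h1, h2 t, h3, h4 t]
    rw [neg_div_neg_eq, one_div_one, one_mul]
  refine ⟨hcr, ?_, ?_⟩
  · have hfe : (fun t : ℝ => cr1Q (n + 1) (vecMk (n + 1) 1 0 0) (vecMk (n + 1) 0 0 1)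
        (vecMk (n + 1) (t ^ 2 * qw) (t • w) 1) (vecMk (n + 1) qy ys 1))
        = fun t : ℝ => -qy / (-(t ^ 2 * qw) + 2 * t * b - qy) := funext hcr
    rw [hfe]
    have hD : HasDerivAt (fun t : ℝ => -(t ^ 2 * qw) + 2 * t * b - qy)
        (-(2 * 0 ^ 1 * qw) + 2 * 1 * b) 0 := by
      exact ((((hasDerivAt_pow 2 (0:ℝ)).mul_const qw).neg).add
        (((hasDerivAt_id (0:ℝ)).const_mul 2).mul_const b)).sub_const qy
    have hD0 : (-(0 ^ 2 * qw) + 2 * 0 * b - qy) ≠ 0 := by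
      norm_num; linarith
    have := (hasDerivAt_const (0:ℝ) (-qy)).div hD hD0
    refine HasDerivAt.congr_deriv this ?_
    norm_num
    field_simp
  · positivity
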